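/- For every natural number n ≥ 2 there exists a finite topological T₀-space X such that X has exactly one down beat point and the number of distinct semiflows on X equals n, i.e., S_F(X) = n. -/

import Mathlib

open NNReal

/-- A semiflow on a topological space `X`: a jointly continuous map
`φ : ℝ≥0 × X → X` with `φ 0 x = x` and `φ s (φ t x) = φ (s + t) x`. -/
def IsSemiflow {X : Type*} [TopologicalSpace X] (φ : ℝ≥0 → X → X) : Prop :=
  Continuous (fun p : ℝ≥0 × X => φ p.1 p.2) ∧
  (∀ x : X, φ 0 x = x) ∧
  ∀ (s t : ℝ≥0) (x : X), φ s (φ t x) = φ (s + t) x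

/-- A semiflow is trivial if every time-`t` map is the identity. -/
def IsTrivialSemiflow {X : Type*} [TopologicalSpace X] (φ : ℝ≥0 → X → X) : Prop :=
  ∀ (t : ℝ≥0) (x : X), φ t x = x

/-- `x` is a down beat point: `U_x \ {x}` has a greatest element in the
specialization order (`y ⤳ x` means `y ≤ x`, i.e. `y ∈ U_x`). -/
def IsDownBeatPoint {X : Type*} [TopologicalSpace X] (x : X) : Prop :=
  ∃ m : X, (m ⤳ x ∧ m ≠ x) ∧ ∀ y : X, y ⤳ x → y ≠ x → y ⤳ m

/-- `x` is an up beat point: `F_x \ {x}` has a least element in the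
specialization order. -/
def IsUpBeatPoint {X : Type*} [TopologicalSpace X] (x : X) : Prop :=
  ∃ m : X, (x ⤳ m ∧ m ≠ x) ∧ ∀ y : X, x ⤳ y → y ≠ x → m ⤳ y

-- Part 1: the space
inductive XS (k : ℕ) : Type
  | P : XS k
  | Q : XS k
  | el : Fin 3 → Fin k → XS k
deriving DecidableEq

def xle {k : ℕ} : XS k → XS k → Prop
  | .P, .P => True
  | .P, .Q => False
  | .P, .el _ _ => True
  | .Q, .P => False
  | .Q, .Q => True
  | .Q, .el _ _ => True
  | .el _ _, .P => False
  | .el _ _, .Q => False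
  | .el c i, .el c' j =>
      c.val ≤ c'.val ∧ (c.val = 0 → c'.val = 0 → i.val = j.val) ∧
        (c.val = 0 → c'.val ≠ 0 → i.val < j.val) ∧ (c.val ≠ 0 → i.val ≤ j.val)

instance {k : ℕ} : PartialOrder (XS k) where
  le := xle
  le_refl x := by rcases x with _ | _ | ⟨c, i⟩ <;> simp [xle]
  le_trans x y z hxy hyz := by
    rcases x with _ | _ | ⟨c, i⟩ <;> rcases y with _ | _ | ⟨c', j⟩ <;>
      rcases z with _ | _ | ⟨c'', l⟩ <;> simp_all [xle] <;> omega
  le_antisymm x y hxy hyx := by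
    rcases x with _ | _ | ⟨c, i⟩ <;> rcases y with _ | _ | ⟨c', j⟩ <;>
      simp_all [xle, Fin.ext_iff, -Fin.val_eq_zero_iff] <;> omega

lemma le_def {k : ℕ} {x y : XS k} : x ≤ y ↔ xle x y := Iff.rfl

instance {k : ℕ} : TopologicalSpace (XS k) where
  IsOpen U := IsLowerSet U
  isOpen_univ := isLowerSet_univ
  isOpen_inter _ _ h h' := h.inter h'
  isOpen_sUnion _ h := isLowerSet_sUnion h

lemma xs_isOpen_iff {k : ℕ} {U : Set (XS k)} : IsOpen U ↔ IsLowerSet U := Iff.rfl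

lemma xs_spec_iff {k : ℕ} {x y : XS k} : x ⤳ y ↔ x ≤ y := by
  rw [specializes_iff_forall_open]
  constructor
  · intro h
    exact h {z | z ≤ y} (fun a b hba hb => hba.trans hb) (by simp)
  · intro h U hU hyU
    exact hU h hyU

instance {k : ℕ} : T0Space (XS k) := by
  rw [t0Space_iff_inseparable]
  intro x y h
  exact le_antisymm (xs_spec_iff.mp h.specializes) (xs_spec_iff.mp h.specializes')

instance {k : ℕ} : Finite (XS k) := by
  have hinj : Function.Injective (fun x : XS k => match x with
    | .P => (Sum.inl true : Bool ⊕ (Fin 3 × Fin k))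
    | .Q => Sum.inl false
    | .el c i => Sum.inr (c, i)) := by
    intro x y h
    rcases x with _ | _ | ⟨c, i⟩ <;> rcases y with _ | _ | ⟨c', j⟩ <;> simp_all
  exact Finite.of_injective _ hinj

-- Part 2: down beat points
lemma dbp_iff {k : ℕ} {x : XS k} :
    IsDownBeatPoint x ↔ ∃ m : XS k, (m ≤ x ∧ m ≠ x) ∧ ∀ y : XS k, y ≤ x → y ≠ x → y ≤ m := by
  unfold IsDownBeatPoint
  simp only [xs_spec_iff]

lemma dbp_t0 {k : ℕ} (hk : 0 < k) : IsDownBeatPoint (XS.el ⟨2, by omega⟩ ⟨0, hk⟩ : XS k) := by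
  rw [dbp_iff]
  refine ⟨XS.el ⟨1, by omega⟩ ⟨0, hk⟩, ⟨by simp [le_def, xle], by simp⟩, ?_⟩
  intro y hy hne
  rcases y with _ | _ | ⟨c, i⟩
  · simp [le_def, xle]
  · simp [le_def, xle]
  · simp only [le_def, xle, Fin.ext_iff, ne_eq, XS.el.injEq] at *
    omega

lemma dbp_unique {k : ℕ} (hk : 0 < k) (x : XS k) (h : IsDownBeatPoint x) :
    x = XS.el ⟨2, by omega⟩ ⟨0, hk⟩ := by
  rw [dbp_iff] at h
  obtain ⟨m, ⟨hm1, hm2⟩, hm3⟩ := h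
  rcases x with _ | _ | ⟨⟨cv, hc⟩, ⟨iv, hik⟩⟩
  · rcases m with _ | _ | _ <;> simp_all [le_def, xle]
  · rcases m with _ | _ | _ <;> simp_all [le_def, xle]
  · interval_cases cv
    · -- label A : downset is {P, Q}
      exfalso
      have hmPQ : m = XS.P ∨ m = XS.Q := by
        rcases m with _ | _ | ⟨⟨cv', hc'⟩, ⟨iv', hiv'⟩⟩
        · left; rfl
        · right; rfl
        · exfalso
          simp only [le_def, xle, ne_eq, XS.el.injEq, Fin.ext_iff, not_true, true_implies, false_implies,
            not_false_eq_true, forall_true_left] at hm1 hm2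
          omega
      rcases hmPQ with rfl | rfl
      · exact absurd (hm3 XS.Q (by simp [le_def, xle]) (by simp)) (by simp [le_def, xle])
      · exact absurd (hm3 XS.P (by simp [le_def, xle]) (by simp)) (by simp [le_def, xle])
    · -- label G
      rcases iv with _ | i0
      · -- g_0 : downset is {P, Q}
        exfalso
        have hmPQ : m = XS.P ∨ m = XS.Q := by
          rcases m with _ | _ | ⟨⟨cv', hc'⟩, ⟨iv', hiv'⟩⟩
          · left; rfl
          · right; rfl
          · exfalso
            simp only [le_def, xle, ne_eq, XS.el.injEq, Fin.ext_iff, not_true, true_implies, false_implies,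
            not_false_eq_true, forall_true_left] at hm1 hm2
            omega
        rcases hmPQ with rfl | rfl
        · exact absurd (hm3 XS.Q (by simp [le_def, xle]) (by simp)) (by simp [le_def, xle])
        · exact absurd (hm3 XS.P (by simp [le_def, xle]) (by simp)) (by simp [le_def, xle])
      · -- g_{i0+1} : maximal lower elements g_{i0} and a_{i0}
        exfalso
        have hi0 : i0 < k := by omega
        have h1 := hm3 (XS.el ⟨1, by omega⟩ ⟨i0, hi0⟩) (by simp [le_def, xle]) (by simp [Fin.ext_iff])
        have h2 := hm3 (XS.el ⟨0, by omega⟩ ⟨i0, hi0⟩) (by simp [le_def, xle]) (by simp)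
        rcases m with _ | _ | ⟨⟨cv', hc'⟩, ⟨iv', hiv'⟩⟩
        · simp [le_def, xle] at h1
        · simp [le_def, xle] at h1
        · simp only [le_def, xle, ne_eq, XS.el.injEq, Fin.ext_iff, not_true, true_implies, false_implies,
            not_false_eq_true, forall_true_left] at hm1 hm2 h1 h2
          omega
    · -- label T
      rcases iv with _ | i0
      · simp [Fin.ext_iff]
      · -- t_{i0+1} : maximal lower elements t_{i0} and g_{i0+1}
        exfalso
        have hi0 : i0 < k := by omega
        have hi1 : i0 + 1 < k := by omega
        have h1 := hm3 (XS.el ⟨2, by omega⟩ ⟨i0, hi0⟩) (by simp [le_def, xle]) (by simp [Fin.ext_iff])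
        have h2 := hm3 (XS.el ⟨1, by omega⟩ ⟨i0 + 1, hi1⟩) (by simp [le_def, xle]) (by simp)
        rcases m with _ | _ | ⟨⟨cv', hc'⟩, ⟨iv', hiv'⟩⟩
        · simp [le_def, xle] at h1
        · simp [le_def, xle] at h1
        · simp only [le_def, xle, ne_eq, XS.el.injEq, Fin.ext_iff, not_true, true_implies, false_implies,
            not_false_eq_true, forall_true_left] at hm1 hm2 h1 h2
          omega

-- Part 3: the flows
def rmap (k j : ℕ) : XS k → XS k
  | .el c i => if c.val = 2 ∧ i.val < j then .el ⟨1, by omega⟩ i else .el c i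
  | x => x

lemma rmap_le {k j : ℕ} (x : XS k) : rmap k j x ≤ x := by
  rcases x with _ | _ | ⟨c, i⟩ <;> simp only [rmap]
  · exact le_rfl
  · exact le_rfl
  · split_ifs with h
    · simp only [le_def, xle]; omega
    · exact le_rfl

lemma rmap_mono {k j : ℕ} : Monotone (rmap k j) := by
  intro x y h
  rcases x with _ | _ | ⟨c, i⟩ <;> rcases y with _ | _ | ⟨c', i'⟩ <;>
    simp only [rmap, le_def, xle] at h ⊢ <;> try trivial
  · split_ifs <;> trivial
  · split_ifs <;> trivial
  · split_ifs with h1 h2 h2 <;> simp only [le_def, xle] <;> omega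

lemma rmap_idem {k j : ℕ} (x : XS k) : rmap k j (rmap k j x) = rmap k j x := by
  rcases x with _ | _ | ⟨c, i⟩ <;> simp only [rmap]
  split_ifs with h <;> simp only [rmap] <;> split_ifs <;> first | rfl | omega

noncomputable def flowF (k j : ℕ) (t : ℝ≥0) (x : XS k) : XS k := if t = 0 then x else rmap k j x

lemma flow_isSemiflow (k j : ℕ) : IsSemiflow (flowF k j) := by
  refine ⟨?_, ?_, ?_⟩
  · rw [continuous_def]
    intro U hU
    have hUl : IsLowerSet U := xs_isOpen_iff.mp hU
    have hrU : IsOpen (rmap k j ⁻¹' U) := xs_isOpen_iff.mpr (hUl.preimage rmap_mono)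
    have hset : (fun p : ℝ≥0 × XS k => flowF k j p.1 p.2) ⁻¹' U
        = (Set.univ ×ˢ (U ∩ rmap k j ⁻¹' U)) ∪ (Set.Ioi 0 ×ˢ (rmap k j ⁻¹' U)) := by
      ext ⟨t, x⟩
      by_cases ht : t = 0
      · simp only [Set.mem_preimage, flowF, ht, if_pos rfl, Set.mem_union, Set.mem_prod,
          Set.mem_univ, true_and, Set.mem_inter_iff, Set.mem_Ioi, lt_self_iff_false, false_and,
          or_false]
        exact ⟨fun hx => ⟨hx, hUl (rmap_le x) hx⟩, fun hx => hx.1⟩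
      · simp only [Set.mem_preimage, flowF, if_neg ht, Set.mem_union, Set.mem_prod, Set.mem_univ,
          true_and, Set.mem_inter_iff, Set.mem_Ioi, pos_iff_ne_zero, ht, not_false_iff, true_and]
        tauto
    rw [hset]
    exact (isOpen_univ.prod (hU.inter hrU)).union (isOpen_Ioi.prod hrU)
  · intro x; simp [flowF]
  · intro s t x
    rcases eq_or_ne s 0 with hs | hs
    · simp [flowF, hs]
    rcases eq_or_ne t 0 with ht | ht
    · simp [flowF, hs, ht]
    · have hst : s + t ≠ 0 := by
        simp only [ne_eq, add_eq_zero]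
        tauto
      simp [flowF, hs, ht, hst, rmap_idem]

-- Part 4: analysis of semiflows
section Analysis

variable {k : ℕ} {φ : ℝ≥0 → XS k → XS k}

lemma sf_mono (hφ : IsSemiflow φ) (t : ℝ≥0) : Monotone (φ t) := by
  intro x y h
  have hc : Continuous (φ t) := hφ.1.comp (continuous_const.prodMk continuous_id)
  exact xs_spec_iff.mp ((xs_spec_iff.mpr h).map hc)

lemma sf_eps (hφ : IsSemiflow φ) : ∃ ε : ℝ≥0, 0 < ε ∧ ∀ s, s < ε → ∀ z : XS k, φ s z ≤ z := by
  have h1 : ∀ᶠ s in nhds (0 : ℝ≥0), ∀ z : XS k, φ s z ≤ z := by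
    rw [Filter.eventually_all]
    intro z
    have hc : Continuous fun t : ℝ≥0 => φ t z :=
      hφ.1.comp (continuous_id.prodMk continuous_const)
    have hU : IsOpen {w : XS k | w ≤ z} := xs_isOpen_iff.mpr (fun a b hba hb => hba.trans hb)
    have hmem : {w : XS k | w ≤ z} ∈ nhds (φ 0 z) := by
      rw [hφ.2.1 z]
      exact hU.mem_nhds (by simp)
    exact hc.continuousAt.eventually_mem hmem
  rcases NNReal.nhds_zero_basis.eventually_iff.mp h1 with ⟨ε, hε, h⟩
  exact ⟨ε, hε, fun s hs z => h hs z⟩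

lemma sf_le (hφ : IsSemiflow φ) (t : ℝ≥0) (x : XS k) : φ t x ≤ x := by
  obtain ⟨ε, hε, hsmall⟩ := sf_eps hφ
  have hhalf : (0 : ℝ≥0) < ε / 2 := by positivity
  have key : ∀ (m : ℕ) (t : ℝ≥0), t ≤ m • (ε / 2) → ∀ x : XS k, φ t x ≤ x := by
    intro m
    induction m with
    | zero =>
      intro t ht x
      rw [zero_smul, le_zero_iff] at ht
      subst ht
      exact le_of_eq (hφ.2.1 x)
    | succ m ih =>
      intro t ht x
      by_cases hcase : t ≤ m • (ε / 2)
      · exact ih t hcase x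
      · push_neg at hcase
        have h1 : m • (ε / 2) ≤ t := hcase.le
        have h2 : t - m • (ε / 2) < ε := by
          have hle : t - m • (ε / 2) ≤ ε / 2 := by
            rw [tsub_le_iff_right]
            rw [succ_nsmul] at ht
            exact ht.trans_eq (add_comm _ _)
          exact lt_of_le_of_lt hle (NNReal.half_lt_self hε.ne')
        have h3 : φ t x = φ (t - m • (ε / 2)) (φ (m • (ε / 2)) x) := by
          rw [hφ.2.2, tsub_add_cancel_of_le h1]
        rw [h3]
        exact le_trans (hsmall _ h2 _) (ih _ le_rfl x)
  obtain ⟨m, hm⟩ := Archimedean.arch t hhalf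
  exact key m t hm x

lemma sf_anti (hφ : IsSemiflow φ) (x : XS k) {s t : ℝ≥0} (hst : s ≤ t) : φ t x ≤ φ s x := by
  have h : φ t x = φ (t - s) (φ s x) := by rw [hφ.2.2, tsub_add_cancel_of_le hst]
  rw [h]
  exact sf_le hφ _ _

lemma sf_per (hφ : IsSemiflow φ) (x : XS k) {t1 p : ℝ≥0} (h : φ (t1 + p) x = φ t1 x)
    (d : ℝ≥0) : φ (t1 + d + p) x = φ (t1 + d) x := by
  have e1 : t1 + d + p = d + (t1 + p) := by ring
  have e2 : d + t1 = t1 + d := by ring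
  rw [e1, ← hφ.2.2 d (t1 + p) x, h, hφ.2.2, e2]

lemma sf_squeeze (hφ : IsSemiflow φ) (x : XS k) {t1 t2 u : ℝ≥0} (h : φ t1 x = φ t2 x)
    (h1 : t1 ≤ u) (h2 : u ≤ t2) : φ u x = φ t1 x := by
  refine le_antisymm (sf_anti hφ x h1) ?_
  rw [h]
  exact sf_anti hφ x h2

lemma sf_tail (hφ : IsSemiflow φ) (x : XS k) {t1 t2 : ℝ≥0} (h12 : t1 < t2)
    (h : φ t1 x = φ t2 x) : ∀ s, t1 ≤ s → φ s x = φ t1 x := by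
  obtain ⟨p, rfl⟩ := le_iff_exists_add.mp h12.le
  have hp : 0 < p := by
    rcases eq_or_ne p 0 with rfl | hne
    · simp at h12
    · exact pos_iff_ne_zero.mpr hne
  have key : ∀ (m : ℕ) (d : ℝ≥0), d ≤ m • p → φ (t1 + d) x = φ t1 x := by
    intro m
    induction m with
    | zero =>
      intro d hd
      rw [zero_smul, le_zero_iff] at hd
      subst hd
      rw [add_zero]
    | succ m ih =>
      intro d hd
      by_cases hdp : d ≤ p
      · exact sf_squeeze hφ x h le_self_add (by exact add_le_add_right hdp t1)
      · push_neg at hdp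
        have h1 : p ≤ d := hdp.le
        have e1 : t1 + d = t1 + (d - p) + p := by
          rw [add_assoc, tsub_add_cancel_of_le h1]
        rw [e1, sf_per hφ x h.symm (d - p)]
        apply ih
        rw [tsub_le_iff_right]
        rw [succ_nsmul] at hd
        exact hd
  intro s hs
  obtain ⟨d, rfl⟩ := le_iff_exists_add.mp hs
  obtain ⟨m, hm⟩ := Archimedean.arch d hp
  exact key m d hm

lemma sf_const (hφ : IsSemiflow φ) (x : XS k) {a b : ℝ≥0} (ha : 0 < a) (hab : a ≤ b) :
    φ b x = φ a x := by
  obtain ⟨u, v, huv, heq⟩ :=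
    Finite.exists_ne_map_eq_of_infinite (fun m : ℕ => φ (a / ((m : ℝ≥0) + 2)) x)
  have honele : ∀ m : ℕ, (1 : ℝ≥0) ≤ (m : ℝ≥0) + 2 := fun m => one_le_two.trans le_add_self
  have hdiv : ∀ m : ℕ, a / ((m : ℝ≥0) + 2) ≤ a := fun m => div_le_self (zero_le) (honele m)
  have hne : a / ((u : ℝ≥0) + 2) ≠ a / ((v : ℝ≥0) + 2) := by
    intro hcon
    apply huv
    have h2u : ((u : ℝ≥0) + 2) ≠ 0 := by positivity
    have h2v : ((v : ℝ≥0) + 2) ≠ 0 := by positivity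
    rw [div_eq_div_iff h2u h2v] at hcon
    have h3 := mul_left_cancel₀ ha.ne' hcon
    have h4 : ((v : ℝ≥0)) = (u : ℝ≥0) := by
      have := add_right_cancel h3
      exact this
    exact (Nat.cast_inj.mp h4).symm
  set s1 := min (a / ((u : ℝ≥0) + 2)) (a / ((v : ℝ≥0) + 2)) with hs1
  set s2 := max (a / ((u : ℝ≥0) + 2)) (a / ((v : ℝ≥0) + 2)) with hs2
  have h12 : s1 < s2 := min_lt_max.mpr hne
  have heq2 : φ s1 x = φ s2 x := by
    rcases le_total (a / ((u : ℝ≥0) + 2)) (a / ((v : ℝ≥0) + 2)) with hle | hle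
    · rw [hs1, hs2, min_eq_left hle, max_eq_right hle]
      exact heq
    · rw [hs1, hs2, min_eq_right hle, max_eq_left hle]
      exact heq.symm
  have hs2a : s2 ≤ a := max_le (hdiv u) (hdiv v)
  have htail := sf_tail hφ x h12 heq2
  rw [htail a (le_trans (min_le_max.trans hs2a) le_rfl |>.trans le_rfl |>.trans le_rfl |>.trans le_rfl |>.trans le_rfl), htail b ((min_le_max.trans hs2a).trans hab)]

end Analysis

-- Part 5: classification of monotone deflations
lemma cls {k : ℕ} (r : XS k → XS k) (hm : Monotone r) (hl : ∀ x, r x ≤ x) :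
    ∃ j, j ≤ k ∧ r = rmap k j := by
  classical
  have hP : r XS.P = XS.P := by
    have h := hl XS.P
    rcases hrp : r XS.P with _ | _ | ⟨c, i⟩ <;> rw [hrp] at h <;> simp_all [le_def, xle]
  have hQ : r XS.Q = XS.Q := by
    have h := hl XS.Q
    rcases hrp : r XS.Q with _ | _ | ⟨c, i⟩ <;> rw [hrp] at h <;> simp_all [le_def, xle]
  have hbot : ∀ (c : Fin 3) (i : Fin k), ∃ (c' : Fin 3) (i' : Fin k),
      r (XS.el c i) = XS.el c' i' := by
    intro c i
    have h1 : XS.P ≤ r (XS.el c i) := by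
      have := hm (show XS.P ≤ XS.el c i by simp [le_def, xle])
      rwa [hP] at this
    have h2 : XS.Q ≤ r (XS.el c i) := by
      have := hm (show XS.Q ≤ XS.el c i by simp [le_def, xle])
      rwa [hQ] at this
    rcases hrp : r (XS.el c i) with _ | _ | ⟨c', i'⟩ <;> rw [hrp] at h1 h2
    · simp [le_def, xle] at h2
    · simp [le_def, xle] at h1
    · exact ⟨c', i', rfl⟩
  have hA : ∀ (i : Fin k), r (XS.el ⟨0, by omega⟩ i) = XS.el ⟨0, by omega⟩ i := by
    intro i
    obtain ⟨⟨cv', hc'⟩, ⟨iv', hiv'⟩, hrp⟩ := hbot ⟨0, by omega⟩ i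
    have h := hl (XS.el ⟨0, by omega⟩ i)
    rw [hrp] at h ⊢
    simp only [le_def, xle, Fin.ext_iff, XS.el.injEq, not_true, true_implies, false_implies,
      not_false_eq_true] at h ⊢
    omega
  have hG : ∀ (m : ℕ) (hmk : m < k),
      r (XS.el ⟨1, by omega⟩ ⟨m, hmk⟩) = XS.el ⟨1, by omega⟩ ⟨m, hmk⟩ := by
    intro m
    induction m with
    | zero =>
      intro hmk
      obtain ⟨⟨cv', hc'⟩, ⟨iv', hiv'⟩, hrp⟩ := hbot ⟨1, by omega⟩ ⟨0, hmk⟩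
      have h := hl (XS.el ⟨1, by omega⟩ ⟨0, hmk⟩)
      rw [hrp] at h ⊢
      simp only [le_def, xle, Fin.ext_iff, XS.el.injEq, not_true, true_implies, false_implies,
        not_false_eq_true] at h ⊢
      omega
    | succ m ih =>
      intro hmk
      have hmk' : m < k := by omega
      obtain ⟨⟨cv', hc'⟩, ⟨iv', hiv'⟩, hrp⟩ := hbot ⟨1, by omega⟩ ⟨m + 1, hmk⟩
      have h := hl (XS.el ⟨1, by omega⟩ ⟨m + 1, hmk⟩)
      have hup : r (XS.el ⟨1, by omega⟩ ⟨m, hmk'⟩) ≤ r (XS.el ⟨1, by omega⟩ ⟨m + 1, hmk⟩) :=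
        hm (by simp [le_def, xle])
      rw [ih hmk'] at hup
      have hup2 : r (XS.el ⟨0, by omega⟩ ⟨m, hmk'⟩) ≤ r (XS.el ⟨1, by omega⟩ ⟨m + 1, hmk⟩) :=
        hm (by simp [le_def, xle])
      rw [hA ⟨m, hmk'⟩] at hup2
      rw [hrp] at h hup hup2 ⊢
      simp only [le_def, xle, Fin.ext_iff, XS.el.injEq, not_true, true_implies, false_implies,
        not_false_eq_true] at h hup hup2 ⊢
      omega
  have hT : ∀ (i : Fin k), r (XS.el ⟨2, by omega⟩ i) = XS.el ⟨2, by omega⟩ i ∨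
      r (XS.el ⟨2, by omega⟩ i) = XS.el ⟨1, by omega⟩ i := by
    intro i
    obtain ⟨⟨cv', hc'⟩, ⟨iv', hiv'⟩, hrp⟩ := hbot ⟨2, by omega⟩ i
    have h := hl (XS.el ⟨2, by omega⟩ i)
    have hup : r (XS.el ⟨1, by omega⟩ i) ≤ r (XS.el ⟨2, by omega⟩ i) :=
      hm (by simp [le_def, xle])
    rw [hG i.val i.isLt] at hup
    rw [hrp] at h hup ⊢
    simp only [le_def, xle, Fin.ext_iff, XS.el.injEq, not_true, true_implies, false_implies,
      not_false_eq_true] at h hup ⊢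
    omega
  have hTmono : ∀ (i i' : Fin k), i.val ≤ i'.val →
      r (XS.el ⟨2, by omega⟩ i) = XS.el ⟨2, by omega⟩ i →
      r (XS.el ⟨2, by omega⟩ i') = XS.el ⟨2, by omega⟩ i' := by
    intro i i' hii hfix
    have hup : r (XS.el ⟨2, by omega⟩ i) ≤ r (XS.el ⟨2, by omega⟩ i') :=
      hm (by simp [le_def, xle, hii])
    rw [hfix] at hup
    rcases hT i' with h | h
    · exact h
    · rw [h] at hup
      simp only [le_def, xle] at hup
      omega
  have hex : ∃ m : ℕ, ∀ i : Fin k, m ≤ i.val → r (XS.el ⟨2, by omega⟩ i) = XS.el ⟨2, by omega⟩ i :=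
    ⟨k, fun i hik => absurd i.isLt (not_lt.mpr hik)⟩
  set j := Nat.find hex with hj
  have hspec := Nat.find_spec hex
  have hjk : j ≤ k := Nat.find_min' hex (fun i hik => absurd i.isLt (not_lt.mpr hik))
  refine ⟨j, hjk, ?_⟩
  funext x
  rcases x with _ | _ | ⟨⟨cv, hc⟩, i⟩
  · exact hP
  · exact hQ
  · interval_cases cv
    · rw [rmap]
      rw [if_neg (by rintro ⟨h2, -⟩; have h3 : (0 : ℕ) = 2 := h2; omega)]
      exact hA i
    · rw [rmap]
      rw [if_neg (by rintro ⟨h2, -⟩; have h3 : (1 : ℕ) = 2 := h2; omega)]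
      exact hG i.val i.isLt
    · by_cases hi : i.val < j
      · have hmov : r (XS.el ⟨2, hc⟩ i) = XS.el ⟨1, by omega⟩ i := by
          rcases hT i with hfix | hmov
          · exfalso
            have hpred : ∀ i' : Fin k, i.val ≤ i'.val →
                r (XS.el ⟨2, by omega⟩ i') = XS.el ⟨2, by omega⟩ i' :=
              fun i' hii => hTmono i i' hii hfix
            exact absurd hpred (Nat.find_min hex hi)
          · exact hmov
        rw [hmov, rmap, if_pos (by exact ⟨rfl, hi⟩)]
      · rw [rmap, if_neg (by simp [hi]), hspec i (not_lt.mp hi)]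

-- Part 6: classification of semiflows
lemma sf_classify {k : ℕ} {φ : ℝ≥0 → XS k → XS k} (hφ : IsSemiflow φ) :
    ∃ j, j ≤ k ∧ φ = flowF k j := by
  obtain ⟨j, hjk, hrj⟩ := cls (φ 1) (sf_mono hφ 1) (fun x => sf_le hφ 1 x)
  refine ⟨j, hjk, ?_⟩
  funext t x
  rcases eq_or_ne t 0 with rfl | ht
  · simp [flowF, hφ.2.1]
  · have h1 : φ t x = φ 1 x := by
      rcases le_total t 1 with h | h
      · exact (sf_const hφ x (pos_iff_ne_zero.mpr ht) h).symm
      · exact sf_const hφ x one_pos h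
    rw [h1, hrj]
    simp [flowF, ht]


-- Final assembly
/-- For every `n ≥ 2` there is a finite `T₀`-space with exactly one down beat
point and exactly `n` semiflows. -/
theorem exists_space_with_n_semiflows (n : ℕ) (hn : 2 ≤ n) :
    ∃ (X : Type) (t : TopologicalSpace X), Finite X ∧ @T0Space X t ∧
      (∃! x : X, @IsDownBeatPoint X t x) ∧
      Nat.card {φ : ℝ≥0 → X → X // @IsSemiflow X t φ} = n := by
  have hk : 0 < n - 1 := by omega
  refine ⟨XS (n - 1), inferInstance, inferInstance, inferInstance, ?_, ?_⟩
  · exact ⟨XS.el ⟨2, by omega⟩ ⟨0, hk⟩, dbp_t0 hk, fun y hy => dbp_unique hk y hy⟩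
  · have key : ∀ j j' : Fin n, j.val < j'.val →
        flowF (n - 1) j.val ≠ flowF (n - 1) j'.val := by
      intro j j' h hcon
      have hj' := j'.isLt
      have hi : j.val < n - 1 := by omega
      have heval := congrFun (congrFun hcon 1) (XS.el ⟨2, by omega⟩ ⟨j.val, hi⟩)
      rw [flowF, flowF, if_neg (one_ne_zero), if_neg (one_ne_zero), rmap, rmap,
        if_neg (by rintro ⟨-, h2⟩; have h3 : (j : ℕ) < (j : ℕ) := h2; omega), if_pos ⟨rfl, h⟩] at heval
      simp only [XS.el.injEq, Fin.ext_iff] at heval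
      have h21 : (2 : ℕ) = 1 := heval.1
      omega
    have hbij : Function.Bijective (fun j : Fin n =>
        (⟨flowF (n - 1) j.val, flow_isSemiflow _ _⟩ :
          {φ : ℝ≥0 → XS (n - 1) → XS (n - 1) // IsSemiflow φ})) := by
      constructor
      · intro j j' hjj
        simp only [Subtype.mk.injEq] at hjj
        rcases Nat.lt_trichotomy j.val j'.val with h | h | h
        · exact absurd hjj (key j j' h)
        · exact Fin.ext h
        · exact absurd hjj.symm (key j' j h)
      · rintro ⟨φ, hφ⟩
        obtain ⟨j, hjk, hflow⟩ := sf_classify hφ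
        have hjn : j < n := by omega
        exact ⟨⟨j, hjn⟩, Subtype.ext hflow.symm⟩
    rw [← Nat.card_eq_of_bijective _ hbij, Nat.card_eq_fintype_card, Fintype.card_fin]
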